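/- Suppose the Hermitian matrix H has a unique smallest eigenvalue e₁ (with eigenvector φ₁ in an orthonormal eigenbasis) and ψ(0) = Σⱼ cⱼφⱼ with c₁ ≠ 0. Then the normalized dual evolution ψ(t)/‖ψ(t)‖, where ψ(t) = exp(-(1/ℏ)tH)ψ(0), converges as t → ∞ to (c₁/|c₁|)·φ₁, the normalized ground state. -/

import Mathlib

open Filter

section Aux

lemma exp_clm_apply_eigen {E : Type*} [NormedAddCommGroup E] [NormedSpace ℂ E] [CompleteSpace E]
    (T : E →L[ℂ] E) (a : ℂ) (x : E) (h : T x = a • x) :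
    NormedSpace.exp T x = Complex.exp a • x := by
  have hpow : ∀ n : ℕ, (T ^ n) x = a ^ n • x := by
    intro n
    induction n with
    | zero => simp
    | succ n ih =>
      rw [pow_succ, ContinuousLinearMap.mul_apply, h, map_smul, ih, smul_smul, pow_succ,
        mul_comm]
  have hsumT := NormedSpace.expSeries_summable' (𝕂 := ℂ) T
  have hsuma := NormedSpace.expSeries_summable' (𝕂 := ℂ) a
  have h1 : NormedSpace.exp T x = ∑' n : ℕ, ((n.factorial⁻¹ : ℂ) • T ^ n) x := by
    rw [NormedSpace.exp_eq_tsum ℂ]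
    exact ((ContinuousLinearMap.apply ℂ E x).map_tsum hsumT)
  rw [h1]
  have h2 : ∀ n : ℕ, ((n.factorial⁻¹ : ℂ) • T ^ n) x = ((n.factorial⁻¹ : ℂ) • a ^ n) • x := by
    intro n
    rw [ContinuousLinearMap.smul_apply, hpow, smul_smul, smul_eq_mul]
  simp_rw [h2]
  have h3 : Complex.exp a = ∑' n : ℕ, ((n.factorial : ℂ))⁻¹ • a ^ n := by
    rw [Complex.exp_eq_exp_ℂ, NormedSpace.exp_eq_tsum ℂ]
  rw [Summable.tsum_smul_const hsuma, h3]

lemma toEuclideanCLM_exp (N : ℕ) (A : Matrix (Fin N) (Fin N) ℂ) :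
    Matrix.toEuclideanCLM (𝕜 := ℂ) (NormedSpace.exp A) =
      NormedSpace.exp (Matrix.toEuclideanCLM (𝕜 := ℂ) A) := by
  letI : SeminormedRing (Matrix (Fin N) (Fin N) ℂ) := Matrix.linftyOpSemiNormedRing
  letI : NormedRing (Matrix (Fin N) (Fin N) ℂ) := Matrix.linftyOpNormedRing
  letI : NormedAlgebra ℂ (Matrix (Fin N) (Fin N) ℂ) := Matrix.linftyOpNormedAlgebra
  have hcont : Continuous (Matrix.toEuclideanCLM (𝕜 := ℂ) (n := Fin N)) := by
    let g : Matrix (Fin N) (Fin N) ℂ →ₗ[ℂ]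
        (EuclideanSpace ℂ (Fin N) →L[ℂ] EuclideanSpace ℂ (Fin N)) :=
      { toFun := fun M => Matrix.toEuclideanCLM (𝕜 := ℂ) M
        map_add' := fun x y => map_add _ x y
        map_smul' := fun r x => map_smul _ r x }
    exact g.continuous_of_finiteDimensional
  letI : NormedAlgebra ℚ (Matrix (Fin N) (Fin N) ℂ) := NormedAlgebra.restrictScalars ℚ ℂ _
  exact NormedSpace.map_exp (Matrix.toEuclideanCLM (𝕜 := ℂ) (n := Fin N)) hcont A

end Aux

/-- If the Hermitian matrix `H` has a unique smallest eigenvalue `e 0` with eigenvector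
`φ 0` in an orthonormal eigenbasis, and `ψ(0) = Σ j, c j • φ j` with `c 0 ≠ 0`, then the
normalized dual evolution `ψ(t)/‖ψ(t)‖` with `ψ(t) = exp (-(1/ℏ) t H) ψ(0)` converges
as `t → ∞` to `(c 0 / |c 0|) • φ 0`, the normalized ground state. -/
theorem dual_evolution_tendsto_ground_state
    (N : ℕ) (hN : 0 < N) (H : Matrix (Fin N) (Fin N) ℂ) (hH : H.IsHermitian)
    (ℏ : ℝ) (hℏ : 0 < ℏ)
    (φ : Fin N → EuclideanSpace ℂ (Fin N)) (hON : Orthonormal ℂ φ)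
    (e : Fin N → ℝ) (heig : ∀ j, H.mulVec (φ j) = (e j : ℂ) • φ j)
    (hmono : Monotone e)
    (hgap : ∀ j : Fin N, j ≠ ⟨0, hN⟩ → e ⟨0, hN⟩ < e j)
    (c : Fin N → ℂ) (hc : c ⟨0, hN⟩ ≠ 0)
    (ψ0 : EuclideanSpace ℂ (Fin N)) (hψ0 : ψ0 = ∑ j, c j • φ j)
    (ψ : ℝ → EuclideanSpace ℂ (Fin N))
    (hψ : ∀ t, ψ t = Matrix.toEuclideanCLM (𝕜 := ℂ)
        (NormedSpace.exp (((-(t / ℏ) : ℝ) : ℂ) • H)) ψ0) :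
    Tendsto (fun t : ℝ => (‖ψ t‖⁻¹ : ℝ) • ψ t) atTop
      (nhds ((c ⟨0, hN⟩ / ((‖c ⟨0, hN⟩‖ : ℝ) : ℂ)) • φ ⟨0, hN⟩)) := by
  set z0 : Fin N := ⟨0, hN⟩ with hz0
  have hφnorm : ∀ j, ‖φ j‖ = 1 := fun j => hON.1 j
  -- eigen action of the generator
  have hclm : ∀ (t : ℝ) (j : Fin N),
      Matrix.toEuclideanCLM (𝕜 := ℂ) (((-(t / ℏ) : ℝ) : ℂ) • H) (φ j)
        = ((((-(t / ℏ) : ℝ) : ℂ)) * (e j : ℂ)) • φ j := by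
    intro t j
    apply (WithLp.equiv 2 (Fin N → ℂ)).injective
    rw [WithLp.equiv_apply, Matrix.ofLp_toEuclideanCLM]
    simp only [Matrix.toLin'_apply, Matrix.smul_mulVec]
    have : H.mulVec (WithLp.equiv 2 (Fin N → ℂ) (φ j)) = (e j : ℂ) • φ j := heig j
    rw [heig j, smul_smul]
    rfl
  -- explicit formula for ψ t
  have hexp : ∀ t : ℝ, ψ t
      = ∑ j, (c j * Complex.exp ((((-(t / ℏ) : ℝ) : ℂ)) * (e j : ℂ))) • φ j := by
    intro t
    rw [hψ t, toEuclideanCLM_exp, hψ0, map_sum]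
    refine Finset.sum_congr rfl fun j _ => ?_
    rw [map_smul, exp_clm_apply_eigen _ _ _ (hclm t j), smul_smul]
  -- rescaled evolution
  set u : ℝ → EuclideanSpace ℂ (Fin N) := fun t =>
    ∑ j, (c j * Complex.exp (((-(t / ℏ) * (e j - e z0) : ℝ) : ℂ))) • φ j with hu
  have hu_rel : ∀ t, u t = Real.exp (t / ℏ * e z0) • ψ t := by
    intro t
    rw [hexp t, Finset.smul_sum]
    refine Finset.sum_congr rfl fun j _ => ?_
    rw [← Complex.coe_smul, smul_smul]
    congr 1
    rw [Complex.ofReal_exp, mul_left_comm, ← Complex.exp_add]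
    congr 2
    push_cast
    ring
  -- limit of u
  have hu_lim : Tendsto u atTop (nhds (c z0 • φ z0)) := by
    have hterm : ∀ j : Fin N, Tendsto
        (fun t : ℝ => (c j * Complex.exp (((-(t / ℏ) * (e j - e z0) : ℝ) : ℂ))) • φ j) atTop
        (nhds (if j = z0 then c z0 • φ z0 else 0)) := by
      intro j
      by_cases hj : j = z0
      · subst hj
        simp only [sub_self, mul_zero, Complex.ofReal_zero, Complex.exp_zero, mul_one, if_pos rfl]
        exact tendsto_const_nhds
      · rw [if_neg hj]
        have hd : 0 < e j - e z0 := sub_pos.mpr (hgap j hj)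
        have h1 : Tendsto (fun t : ℝ => t / ℏ) atTop atTop :=
          tendsto_id.atTop_div_const hℏ
        have h2 : Tendsto (fun t : ℝ => t / ℏ * (e j - e z0)) atTop atTop :=
          h1.atTop_mul_const hd
        have h3 : Tendsto (fun t : ℝ => -(t / ℏ) * (e j - e z0)) atTop atBot := by
          have h := tendsto_neg_atTop_atBot.comp h2
          exact h.congr fun t => by simp [Function.comp]
        have h4 : Tendsto (fun t : ℝ => Real.exp (-(t / ℏ) * (e j - e z0))) atTop (nhds 0) :=
          Real.tendsto_exp_atBot.comp h3
        have h5 : Tendsto (fun t : ℝ =>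
            (c j * Complex.exp (((-(t / ℏ) * (e j - e z0) : ℝ) : ℂ)))) atTop (nhds 0) := by
          have h6 : Tendsto (fun t : ℝ =>
              ((Real.exp (-(t / ℏ) * (e j - e z0)) : ℝ) : ℂ)) atTop (nhds ((0 : ℝ) : ℂ)) :=
            (Complex.continuous_ofReal.tendsto _).comp h4
          have h7 := h6.const_mul (c j)
          simpa [Complex.ofReal_exp, mul_zero] using h7
        have := h5.smul_const (φ j)
        simpa using this
    have hsum := tendsto_finset_sum Finset.univ (fun j _ => hterm j)
    have hval : (∑ j, if j = z0 then c z0 • φ z0 else 0) = c z0 • φ z0 := by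
      simp
    rw [hval] at hsum
    exact hsum
  -- the limit is nonzero
  have hφ0 : φ z0 ≠ 0 := by
    intro h
    have := hφnorm z0
    rw [h] at this
    simp at this
  have hL : c z0 • φ z0 ≠ 0 := smul_ne_zero hc hφ0
  have hnorm_ne : ‖c z0 • φ z0‖ ≠ 0 := norm_ne_zero_iff.2 hL
  have key : Tendsto (fun t => ‖u t‖⁻¹ • u t) atTop
      (nhds (‖c z0 • φ z0‖⁻¹ • (c z0 • φ z0))) :=
    (hu_lim.norm.inv₀ hnorm_ne).smul hu_lim
  have hfun : (fun t : ℝ => (‖ψ t‖⁻¹ : ℝ) • ψ t) = fun t => ‖u t‖⁻¹ • u t := by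
    funext t
    rw [hu_rel t, norm_smul, Real.norm_eq_abs, Real.abs_exp, mul_inv, smul_smul,
      mul_assoc, mul_comm ‖ψ t‖⁻¹ (Real.exp (t / ℏ * e z0)),
      inv_mul_cancel_left₀ (Real.exp_ne_zero _)]
  have hval2 : ‖c z0 • φ z0‖⁻¹ • (c z0 • φ z0)
      = (c z0 / ((‖c z0‖ : ℝ) : ℂ)) • φ z0 := by
    rw [norm_smul, hφnorm, mul_one, ← Complex.coe_smul, smul_smul]
    rw [Complex.ofReal_inv, div_eq_mul_inv, mul_comm]
  rw [hfun]
  rw [← hval2]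
  exact key
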